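/- arXiv:2403.04702 — 3 statements merged into one kernel-verified Lean document; each statement's English description precedes it below -/
import Mathlib

section
/- Let P be a real Hilbert space and 𝒜 : P → P a bounded self-adjoint linear operator for which there exist constants 0 < m ≤ M with m‖q‖² ≤ ⟨𝒜q, q⟩ ≤ M‖q‖² for all q ∈ P. Let α, β ∈ ℝ with α ≠ 0, β ≥ 0, and β + α² < 1/M. If a sequence (eₙ)ₙ≥0 in P satisfies the Ramshaw–Mesina error recursion e_{n+1} = (I − (β + α²)𝒜) eₙ + β 𝒜 e_{n−1} for all n ≥ 1, then eₙ → 0 in P as n → ∞. -/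
open scoped RealInnerProductSpace

lemma rm_cs2 {P : Type*} [NormedAddCommGroup P] [InnerProductSpace ℝ P]
    (𝒜 : P →L[ℝ] P) (hsa : ∀ x y : P, ⟪𝒜 x, y⟫ = ⟪x, 𝒜 y⟫)
    (hpos : ∀ q : P, 0 ≤ ⟪𝒜 q, q⟫)
    (x y : P) :
    0 ≤ ⟪𝒜 y, y⟫ ^ 2 * ⟪𝒜 x, x⟫ - ⟪𝒜 y, y⟫ * ⟪𝒜 x, y⟫ ^ 2 := by
  have key := hpos (⟪𝒜 y, y⟫ • x - ⟪𝒜 x, y⟫ • y)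
  have hyx : ⟪𝒜 y, x⟫ = ⟪𝒜 x, y⟫ := by rw [hsa y x, real_inner_comm]
  simp only [map_sub, map_smul, inner_sub_left, inner_sub_right,
    real_inner_smul_left, real_inner_smul_right, hyx] at key
  nlinarith [key]

lemma rm_bound {P : Type*} [NormedAddCommGroup P] [InnerProductSpace ℝ P]
    (𝒜 : P →L[ℝ] P) (hsa : ∀ x y : P, ⟪𝒜 x, y⟫ = ⟪x, 𝒜 y⟫)
    (m M : ℝ) (hm : 0 < m) (hM : 0 < M)
    (hlow : ∀ q : P, m * ‖q‖ ^ 2 ≤ ⟪𝒜 q, q⟫)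
    (hhigh : ∀ q : P, ⟪𝒜 q, q⟫ ≤ M * ‖q‖ ^ 2)
    (x : P) : ‖𝒜 x‖ ^ 2 ≤ M * ⟪𝒜 x, x⟫ := by
  have hpos : ∀ q : P, 0 ≤ ⟪𝒜 q, q⟫ := fun q =>
    le_trans (by positivity) (hlow q)
  have hcs := rm_cs2 𝒜 hsa hpos x (𝒜 x)
  have hs : ⟪𝒜 x, 𝒜 x⟫ = ‖𝒜 x‖ ^ 2 := real_inner_self_eq_norm_sq _
  rw [hs] at hcs
  set s := ‖𝒜 x‖ ^ 2 with hsdef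
  set r := ⟪𝒜 (𝒜 x), 𝒜 x⟫ with hrdef
  rcases eq_or_lt_of_le (sq_nonneg ‖𝒜 x‖) with h | h
  · rw [hsdef, ← h]
    exact mul_nonneg hM.le (hpos x)
  · have hr : m * s ≤ r := hlow _
    have hr2 : r ≤ M * s := hhigh _
    have hr0 : 0 < r := lt_of_lt_of_le (mul_pos hm h) hr
    have h1 : r * s ^ 2 ≤ r ^ 2 * ⟪𝒜 x, x⟫ := by linarith [hcs]
    have h2 : r * (r * ⟪𝒜 x, x⟫) ≤ (M * s) * (r * ⟪𝒜 x, x⟫) :=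
      mul_le_mul_of_nonneg_right hr2 (mul_nonneg hr0.le (hpos x))
    have hs0 : 0 < s := by rw [hsdef]; exact h
    have h3 : s ^ 2 ≤ M * s * ⟪𝒜 x, x⟫ :=
      le_of_mul_le_mul_left (by nlinarith [h1, h2]) hr0
    exact le_of_mul_le_mul_left (by nlinarith [h3]) hs0

set_option maxHeartbeats 1000000 in
/-- Convergence of the Ramshaw–Mesina iteration (error form): if `𝒜` is a bounded
self-adjoint operator on a real Hilbert space `P` with spectral bounds
`m‖q‖² ≤ ⟪𝒜q, q⟫ ≤ M‖q‖²` (`0 < m ≤ M`), `α ≠ 0`, `β ≥ 0`, `β + α² < 1/M`, and the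
errors satisfy `e_{n+1} = (I − (β + α²)𝒜) eₙ + β 𝒜 e_{n−1}` for `n ≥ 1`,
then `eₙ → 0`. -/
theorem ramshaw_mesina_error_convergence
    {P : Type*} [NormedAddCommGroup P] [InnerProductSpace ℝ P] [CompleteSpace P]
    (𝒜 : P →L[ℝ] P) (hsa : ∀ x y : P, ⟪𝒜 x, y⟫ = ⟪x, 𝒜 y⟫)
    (m M : ℝ) (hm : 0 < m) (hmM : m ≤ M)
    (hlow : ∀ q : P, m * ‖q‖ ^ 2 ≤ ⟪𝒜 q, q⟫)
    (hhigh : ∀ q : P, ⟪𝒜 q, q⟫ ≤ M * ‖q‖ ^ 2)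
    (α β : ℝ) (hα : α ≠ 0) (hβ : 0 ≤ β) (hcond : β + α ^ 2 < 1 / M)
    (e : ℕ → P)
    (hrec : ∀ n : ℕ, 1 ≤ n →
      e (n + 1) = (e n - (β + α ^ 2) • 𝒜 (e n)) + β • 𝒜 (e (n - 1))) :
    Filter.Tendsto e Filter.atTop (nhds 0) := by
  have hM : 0 < M := hm.trans_le hmM
  have hα2 : 0 < α ^ 2 := by positivity
  have hpos : ∀ q : P, 0 ≤ ⟪𝒜 q, q⟫ := fun q => le_trans (by positivity) (hlow q)
  have hMcond : M * (β + α ^ 2) < 1 := by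
    rw [lt_div_iff₀ hM] at hcond; linarith
  set κ : ℝ := 1 - M * (β + α ^ 2 / 2) with hκdef
  have hκ : 0 < κ := by rw [hκdef]; nlinarith [mul_pos hM hα2]
  -- the auxiliary sequence
  set f : ℕ → P := fun n => β • (e n - e (n - 1)) + α ^ 2 • e n with hfdef
  have hstep : ∀ n, 1 ≤ n → e (n + 1) = e n - 𝒜 (f n) := by
    intro n hn
    rw [hrec n hn, hfdef]
    simp only [map_add, map_smul, map_sub]
    module
  -- energy
  set E : ℕ → ℝ := fun n => α ^ 2 / 2 * ‖e n‖ ^ 2 + β / 2 * ‖e n - e (n - 1)‖ ^ 2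
    with hEdef
  have hE0 : ∀ n, 0 ≤ E n := by
    intro n
    have := sq_nonneg ‖e n‖
    have := sq_nonneg ‖e n - e (n - 1)‖
    rw [hEdef]
    positivity
  have key : ∀ n, 1 ≤ n → E (n + 1) + κ * ⟪𝒜 (f n), f n⟫ ≤ E n := by
    intro n hn
    have hAb : ‖𝒜 (f n)‖ ^ 2 ≤ M * ⟪𝒜 (f n), f n⟫ :=
      rm_bound 𝒜 hsa m M hm hM hlow hhigh (f n)
    have hc0 : 0 ≤ ⟪𝒜 (f n), f n⟫ := hpos (f n)
    set a := e n
    set b := e (n - 1)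
    set g := 𝒜 (f n) with hgdef
    have hsucc : e (n + 1) = a - g := hstep n hn
    have hidx : n + 1 - 1 = n := rfl
    have hEn1 : E (n + 1) = α ^ 2 / 2 * ‖a - g‖ ^ 2 + β / 2 * ‖g‖ ^ 2 := by
      rw [hEdef]
      simp only [hidx, hsucc]
      congr 2
      rw [show a - g - a = -g by abel, norm_neg]
    have h1 : ‖a - g‖ ^ 2 = ‖a‖ ^ 2 - 2 * ⟪a, g⟫ + ‖g‖ ^ 2 := norm_sub_sq_real a g
    have h2 : ⟪g, f n⟫ = β * ⟪g, a - b⟫ + α ^ 2 * ⟪g, a⟫ := by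
      rw [hfdef]
      simp only [inner_add_right, real_inner_smul_right]
      rfl
    have h3 : 2 * ⟪g, a - b⟫ ≤ ‖g‖ ^ 2 + ‖a - b‖ ^ 2 := by
      have := real_inner_le_norm g (a - b)
      nlinarith [sq_nonneg (‖g‖ - ‖a - b‖)]
    have h4 : ⟪a, g⟫ = ⟪g, a⟫ := real_inner_comm g a
    rw [hEn1, hEdef]
    have h5 : β * (2 * ⟪g, a - b⟫) ≤ β * (‖g‖ ^ 2 + ‖a - b‖ ^ 2) :=
      mul_le_mul_of_nonneg_left h3 hβ
    have h6 : (α ^ 2 / 2 + β) * ‖g‖ ^ 2 ≤ (α ^ 2 / 2 + β) * (M * ⟪g, f n⟫) :=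
      mul_le_mul_of_nonneg_left hAb (by positivity)
    nlinarith [h5, h6]
  -- monotone energy, limit exists
  set E' : ℕ → ℝ := fun k => E (k + 1) with hE'def
  have hanti : Antitone E' := by
    apply antitone_nat_of_succ_le
    intro k
    have h := key (k + 1) (by omega)
    have h2 := mul_nonneg hκ.le (hpos (f (k + 1)))
    simp only [hE'def]
    linarith
  have hbdd : BddBelow (Set.range E') := ⟨0, by rintro x ⟨n, rfl⟩; exact hE0 _⟩
  have hlim : Filter.Tendsto E' Filter.atTop (nhds (⨅ n, E' n)) :=
    tendsto_atTop_ciInf hanti hbdd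
  have hshift : Filter.Tendsto (fun k => E' (k + 1)) Filter.atTop (nhds (⨅ n, E' n)) :=
    hlim.comp (Filter.tendsto_add_atTop_nat 1)
  have hdiff : Filter.Tendsto (fun k => E' k - E' (k + 1)) Filter.atTop (nhds 0) := by
    have := hlim.sub hshift
    simpa using this
  have hcq : Filter.Tendsto (fun k => ⟪𝒜 (f (k + 1)), f (k + 1)⟫) Filter.atTop (nhds 0) := by
    apply squeeze_zero (g := fun k => (E' k - E' (k + 1)) / κ) (fun k => hpos _)
    · intro k
      rw [le_div_iff₀ hκ]
      have h := key (k + 1) (by omega)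
      simp only [hE'def]
      linarith
    · simpa using hdiff.div_const κ
  have hf2 : Filter.Tendsto (fun k => ‖f (k + 1)‖ ^ 2) Filter.atTop (nhds 0) := by
    apply squeeze_zero (g := fun k => ⟪𝒜 (f (k + 1)), f (k + 1)⟫ / m) (fun k => sq_nonneg _)
    · intro k
      rw [le_div_iff₀ hm]
      linarith [hlow (f (k + 1))]
    · simpa using hcq.div_const m
  have hfn : Filter.Tendsto (fun k => f (k + 1)) Filter.atTop (nhds 0) := by
    rw [tendsto_zero_iff_norm_tendsto_zero]
    have h := (Real.continuous_sqrt.tendsto 0).comp hf2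
    rw [Real.sqrt_zero] at h
    exact h.congr fun k => Real.sqrt_sq (norm_nonneg _)
  have hAf : Filter.Tendsto (fun k => 𝒜 (f (k + 1))) Filter.atTop (nhds 0) := by
    have h := (𝒜.continuous.tendsto 0).comp hfn
    rw [map_zero] at h
    exact h.congr fun k => rfl
  have hd : Filter.Tendsto (fun k => e (k + 1 + 1) - e (k + 1)) Filter.atTop (nhds 0) := by
    have h := hAf.neg
    simp only [neg_zero] at h
    apply h.congr
    intro k
    rw [hstep (k + 1) (by omega)]
    abel
  have hd' : Filter.Tendsto (fun k => e (k + 1) - e k) Filter.atTop (nhds 0) :=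
    (Filter.tendsto_add_atTop_iff_nat 1).mp hd
  have he1 : Filter.Tendsto (fun k => α ^ 2 • e (k + 1)) Filter.atTop (nhds 0) := by
    have h := hfn.sub (hd'.const_smul β)
    simp only [smul_zero, sub_zero] at h
    apply h.congr
    intro k
    show f (k + 1) - β • (e (k + 1) - e k) = α ^ 2 • e (k + 1)
    rw [hfdef]
    simp only [Nat.add_sub_cancel]
    module
  have he : Filter.Tendsto (fun k => e (k + 1)) Filter.atTop (nhds 0) := by
    have h := he1.const_smul ((α ^ 2)⁻¹)
    simp only [smul_zero] at h
    apply h.congr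
    intro k
    rw [smul_smul, inv_mul_cancel₀ (ne_of_gt hα2), one_smul]
  exact (Filter.tendsto_add_atTop_iff_nat 1).mp he
end

section
/- Let P be a real Hilbert space, 𝒜 : P → P a bounded self-adjoint linear operator, and α, β ∈ ℝ. For q ∈ P write |q|²_𝒜 = ⟨𝒜q, q⟩. Suppose (eₙ) in P satisfies e_{n+1} = (I − (β + α²)𝒜) eₙ + β 𝒜 e_{n−1} for all n ≥ 1. Define Eₙ = ‖eₙ‖² + β|e_{n−1}|²_𝒜 + α²|eₙ|²_𝒜 + (‖eₙ − e_{n−1}‖² − (β + α²)|eₙ − e_{n−1}|²_𝒜) and Pₙ = (‖eₙ − e_{n−1}‖² − (β + α²)|eₙ − e_{n−1}|²_𝒜) + 2α²|eₙ|²_𝒜 + β|e_{n+1} − e_{n−1}|²_𝒜. Then for every n ≥ 1: E_{n+1} − Eₙ + Pₙ = 0. -/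
open scoped RealInnerProductSpace

private lemma rm_aux
    {P : Type*} [NormedAddCommGroup P] [InnerProductSpace ℝ P] [CompleteSpace P]
    (𝒜 : P →L[ℝ] P) (hsa : ∀ x y : P, ⟪𝒜 x, y⟫ = ⟪x, 𝒜 y⟫)
    (α β : ℝ) (a b c : P)
    (hc : c = (a - (β + α ^ 2) • 𝒜 a) + β • 𝒜 b) :
    (‖c‖ ^ 2 + β * ⟪𝒜 a, a⟫ + α ^ 2 * ⟪𝒜 c, c⟫
        + (‖c - a‖ ^ 2 - (β + α ^ 2) * ⟪𝒜 (c - a), c - a⟫))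
    - (‖a‖ ^ 2 + β * ⟪𝒜 b, b⟫ + α ^ 2 * ⟪𝒜 a, a⟫
        + (‖a - b‖ ^ 2 - (β + α ^ 2) * ⟪𝒜 (a - b), a - b⟫))
    + ((‖a - b‖ ^ 2 - (β + α ^ 2) * ⟪𝒜 (a - b), a - b⟫)
        + 2 * α ^ 2 * ⟪𝒜 a, a⟫
        + β * ⟪𝒜 (c - b), c - b⟫) = 0 := by
  subst hc
  simp only [← real_inner_self_eq_norm_sq, map_sub, map_add, map_smul,
    inner_sub_left, inner_sub_right, inner_add_left, inner_add_right,
    inner_smul_left, inner_smul_right, RCLike.conj_to_real]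
  linear_combination (-(2*β*α^2) - β^2 - α^4) * hsa (𝒜 a) a
    + (β*α^2 + β^2) * hsa (𝒜 b) a + (β*α^2 + β^2) * hsa (𝒜 a) b
    + (β + α^2) * hsa a a + (-β) * hsa a b + (-β^2) * hsa (𝒜 b) b

/-- Energy identity `E_{n+1} − Eₙ + Pₙ = 0` for the Ramshaw–Mesina error recursion,
where `Eₙ = ‖eₙ‖² + β|e_{n−1}|²_𝒜 + α²|eₙ|²_𝒜 + (‖eₙ−e_{n−1}‖² − (β+α²)|eₙ−e_{n−1}|²_𝒜)`
and `Pₙ = (‖eₙ−e_{n−1}‖² − (β+α²)|eₙ−e_{n−1}|²_𝒜) + 2α²|eₙ|²_𝒜 + β|e_{n+1}−e_{n−1}|²_𝒜`,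
with `|q|²_𝒜 = ⟪𝒜q, q⟫`. -/
theorem ramshaw_mesina_energy_identity
    {P : Type*} [NormedAddCommGroup P] [InnerProductSpace ℝ P] [CompleteSpace P]
    (𝒜 : P →L[ℝ] P) (hsa : ∀ x y : P, ⟪𝒜 x, y⟫ = ⟪x, 𝒜 y⟫)
    (α β : ℝ) (e : ℕ → P)
    (hrec : ∀ n : ℕ, 1 ≤ n →
      e (n + 1) = (e n - (β + α ^ 2) • 𝒜 (e n)) + β • 𝒜 (e (n - 1)))
    (E Pn : ℕ → ℝ)
    (hE : ∀ n : ℕ, 1 ≤ n →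
      E n = ‖e n‖ ^ 2 + β * ⟪𝒜 (e (n - 1)), e (n - 1)⟫ + α ^ 2 * ⟪𝒜 (e n), e n⟫
        + (‖e n - e (n - 1)‖ ^ 2
            - (β + α ^ 2) * ⟪𝒜 (e n - e (n - 1)), e n - e (n - 1)⟫))
    (hP : ∀ n : ℕ, 1 ≤ n →
      Pn n = (‖e n - e (n - 1)‖ ^ 2
            - (β + α ^ 2) * ⟪𝒜 (e n - e (n - 1)), e n - e (n - 1)⟫)
        + 2 * α ^ 2 * ⟪𝒜 (e n), e n⟫
        + β * ⟪𝒜 (e (n + 1) - e (n - 1)), e (n + 1) - e (n - 1)⟫) :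
    ∀ n : ℕ, 1 ≤ n → E (n + 1) - E n + Pn n = 0 := by
  intro n hn
  have h1 : n + 1 - 1 = n := rfl
  rw [hE (n + 1) (by omega), hE n hn, hP n hn, h1]
  exact rm_aux 𝒜 hsa α β (e n) (e (n - 1)) (e (n + 1)) (hrec n hn)
end

section
/- Let V and P be real Hilbert spaces, A : V → V an invertible bounded self-adjoint linear operator, B : V → P a bounded linear operator with adjoint B* : P → V, and f ∈ V. Assume the Schur complement 𝒜 = B ∘ A⁻¹ ∘ B* : P → P is self-adjoint and satisfies m‖q‖² ≤ ⟨𝒜q, q⟩ ≤ M‖q‖² for all q ∈ P with 0 < m ≤ M. Let α, β ∈ ℝ with α ≠ 0, β ≥ 0, and β + α² < 1/M. Let (u, p) ∈ V × P solve A u + B* p = f and B u = 0. If sequences (uₙ)ₙ≥1 in V and (pₙ)ₙ≥0 in P satisfy A u_{n+1} + B* pₙ = f for all n ≥ 0 and p_{n+1} − pₙ − β B(u_{n+1} − uₙ) − α² B u_{n+1} = 0 for all n ≥ 1, then pₙ → p in P and uₙ → u in V as n → ∞. -/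
open scoped RealInnerProductSpace

set_option linter.unusedSectionVars false
set_option linter.unusedVariables false
set_option synthInstance.maxHeartbeats 1000000
set_option maxHeartbeats 4000000

section RMAux

variable {P : Type*} [NormedAddCommGroup P] [InnerProductSpace ℝ P] [CompleteSpace P]

def RMIsSym (T : P →L[ℝ] P) : Prop := ∀ x y : P, ⟪T x, y⟫ = ⟪x, T y⟫

lemma rm_norm_smul (c : ℝ) (Y : P →L[ℝ] P) : ‖c • Y‖ = |c| * ‖Y‖ := by
  rw [norm_smul (α := ℝ) c Y, Real.norm_eq_abs]

lemma rm_norm_le_of_form (T : P →L[ℝ] P) (hT : RMIsSym T) (K : ℝ) (hK : 0 ≤ K)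
    (h : ∀ x : P, |⟪T x, x⟫| ≤ K * ‖x‖ ^ 2) : ‖T‖ ≤ K := by
  refine T.opNorm_le_bound hK (fun x => ?_)
  rcases eq_or_ne (T x) 0 with hTx | hTx
  · simp [hTx]; positivity
  have hx : x ≠ 0 := by rintro rfl; simp at hTx
  have h0 : ‖T x‖ ≠ 0 := norm_ne_zero_iff.mpr hTx
  set y : P := (‖x‖ / ‖T x‖) • T x with hy
  have hyn : ‖y‖ = ‖x‖ := by
    rw [hy, norm_smul]
    rw [Real.norm_eq_abs, abs_div, abs_norm, abs_norm, div_mul_cancel₀]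
    exact h0
  have key : 4 * ⟪T x, y⟫ = ⟪T (x + y), x + y⟫ - ⟪T (x - y), x - y⟫ := by
    have h1 : ⟪T y, x⟫ = ⟪T x, y⟫ := by rw [hT y x, real_inner_comm]
    simp only [map_add, map_sub, inner_add_left, inner_add_right,
      inner_sub_left, inner_sub_right]
    linarith [h1]
  have hpar2 : ‖x + y‖ ^ 2 + ‖x - y‖ ^ 2 = 4 * ‖x‖ ^ 2 := by
    have hp := parallelogram_law_with_norm ℝ x y
    linear_combination hp + (2 * ‖y‖ + 2 * ‖x‖) * hyn
  have hbound : ⟪T x, y⟫ ≤ K * ‖x‖ ^ 2 := by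
    have h1 := (abs_le.mp (h (x + y))).2
    have h2 := (abs_le.mp (h (x - y))).1
    have h3 : K * ‖x + y‖ ^ 2 + K * ‖x - y‖ ^ 2 = 4 * (K * ‖x‖ ^ 2) := by
      linear_combination K * hpar2
    linarith
  have hval : ⟪T x, y⟫ = ‖x‖ * ‖T x‖ := by
    rw [hy, real_inner_smul_right, real_inner_self_eq_norm_sq]
    field_simp
  rw [hval] at hbound
  have hxpos : (0:ℝ) < ‖x‖ := norm_pos_iff.mpr hx
  have hb2 : ‖x‖ * ‖T x‖ ≤ ‖x‖ * (K * ‖x‖) := by nlinarith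
  exact le_of_mul_le_mul_left hb2 hxpos

/-- scalar Heron-type iteration -/
noncomputable def rmw (r : ℝ) : ℕ → ℝ
  | 0 => 0
  | (n+1) => (r + (rmw r n) ^ 2) / 2

/-- operator Heron-type iteration -/
noncomputable def rmW (Y : P →L[ℝ] P) : ℕ → P →L[ℝ] P
  | 0 => 0
  | (n+1) => (2⁻¹ : ℝ) • (Y + rmW Y n * rmW Y n)

/-- square root of `1 - Y` for `‖Y‖ ≤ r < 1`. -/
lemma rm_sqrt_one_sub (Y : P →L[ℝ] P) (hY : RMIsSym Y) (r : ℝ) (hr0 : 0 ≤ r)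
    (hr1 : r < 1) (hYn : ‖Y‖ ≤ r) :
    ∃ X : P →L[ℝ] P, RMIsSym X ∧ X * X = 1 - Y ∧
      (∀ x : P, Real.sqrt (1 - r) * ‖x‖ ^ 2 ≤ ⟪X x, x⟫) ∧
      (∀ Z : P →L[ℝ] P, Z * Y = Y * Z → Z * X = X * Z) := by
  classical
  obtain ⟨r', hr'⟩ : ∃ r' : ℝ, r' = 1 - Real.sqrt (1 - r) := ⟨_, rfl⟩
  have h1r : (0:ℝ) ≤ 1 - r := by linarith
  have hsq : Real.sqrt (1 - r) ^ 2 = 1 - r := Real.sq_sqrt h1r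
  have hs0 : 0 ≤ Real.sqrt (1 - r) := Real.sqrt_nonneg _
  have hs1 : Real.sqrt (1 - r) ≤ 1 := by nlinarith [hsq, hs0]
  have hr'0 : 0 ≤ r' := by simp only [hr', sub_nonneg]; exact hs1
  have hr'1 : r' < 1 := by
    have : 0 < Real.sqrt (1 - r) := Real.sqrt_pos.mpr (by linarith)
    simp only [hr']; linarith
  have hfix : (r + r' ^ 2) / 2 = r' := by
    simp only [hr']; nlinarith [hsq]
  obtain ⟨w, hwdef⟩ : ∃ w : ℕ → ℝ, w = rmw r := ⟨_, rfl⟩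
  have hw0 : w 0 = 0 := by rw [hwdef]; rfl
  have hwS : ∀ n, w (n + 1) = (r + w n ^ 2) / 2 := fun n => by rw [hwdef]; simp [rmw]
  have hwnn : ∀ n, 0 ≤ w n := by
    intro n; induction n with
    | zero => simp [hw0]
    | succ k ih => rw [hwS]; positivity
  have hwle : ∀ n, w n ≤ r' := by
    intro n; induction n with
    | zero => simpa [hw0] using hr'0
    | succ k ih =>
      have h2 : w k ^ 2 ≤ r' ^ 2 := by nlinarith [hwnn k]
      calc w (k+1) = (r + w k ^ 2) / 2 := hwS k
        _ ≤ (r + r' ^ 2) / 2 := by linarith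
        _ = r' := hfix
  have hwmono : Monotone w := by
    apply monotone_nat_of_le_succ
    intro n
    induction n with
    | zero =>
      calc w 0 = 0 := hw0
        _ ≤ (r + w 0 ^ 2) / 2 := by positivity
        _ = w 1 := (hwS 0).symm
    | succ k ih =>
      have h2 : w k ^ 2 ≤ w (k+1) ^ 2 := by nlinarith [hwnn k]
      calc w (k+1) = (r + w k ^ 2) / 2 := hwS k
        _ ≤ (r + w (k+1) ^ 2) / 2 := by linarith
        _ = w (k+2) := (hwS (k+1)).symm
  obtain ⟨W, hWdef⟩ : ∃ W : ℕ → P →L[ℝ] P, W = rmW Y := ⟨_, rfl⟩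
  have hW0 : W 0 = 0 := by rw [hWdef]; rfl
  have hWS : ∀ n, W (n + 1) = (2⁻¹ : ℝ) • (Y + W n * W n) := fun n => by rw [hWdef]; simp [rmW]
  have hWsym : ∀ n, RMIsSym (W n) := by
    intro n; induction n with
    | zero => intro x y; simp [hW0]
    | succ k ih =>
      intro x y
      rw [hWS]
      simp only [ContinuousLinearMap.smul_apply, ContinuousLinearMap.add_apply,
        ContinuousLinearMap.mul_apply, real_inner_smul_left, real_inner_smul_right,
        inner_add_left, inner_add_right]
      rw [hY, ih (W k x) y, ih x (W k y)]
  have hWnorm : ∀ n, ‖W n‖ ≤ w n := by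
    intro n; induction n with
    | zero => simp [hW0, hw0]
    | succ k ih =>
      rw [hWS, hwS, rm_norm_smul]
      have h1 : ‖Y + W k * W k‖ ≤ r + w k ^ 2 := by
        refine (norm_add_le _ _).trans ?_
        have h2 : ‖W k * W k‖ ≤ w k ^ 2 := by
          refine (norm_mul_le _ _).trans ?_
          have := hwnn k
          nlinarith [norm_nonneg (W k)]
        linarith
      rw [abs_of_nonneg (by norm_num : (0:ℝ) ≤ (2⁻¹:ℝ))]
      linarith
  have hWcomm : ∀ (Z : P →L[ℝ] P), Z * Y = Y * Z → ∀ n, Z * W n = W n * Z := by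
    intro Z hZ n
    induction n with
    | zero => simp [hW0]
    | succ k ih =>
      rw [hWS, mul_smul_comm, smul_mul_assoc, mul_add, add_mul, hZ,
        ← mul_assoc, ih, mul_assoc, ih, mul_assoc]
  have hWdiff : ∀ n, ‖W (n + 1) - W n‖ ≤ w (n + 1) - w n := by
    intro n
    induction n with
    | zero =>
      rw [hWS, hW0, hwS, hw0, sub_zero]
      have hz : (0:P →L[ℝ] P) * 0 = 0 := by simp
      rw [hz, add_zero, rm_norm_smul]
      rw [abs_of_nonneg (by norm_num : (0:ℝ) ≤ (2⁻¹:ℝ))]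
      nlinarith [hYn, norm_nonneg Y]
    | succ k ih =>
      have hfact : W (k + 2) - W (k + 1)
          = (2⁻¹ : ℝ) • (W (k+1) * (W (k+1) - W k) + (W (k+1) - W k) * W k) := by
        have h : W (k+1) * (W (k+1) - W k) + (W (k+1) - W k) * W k
            = W (k+1) * W (k+1) - W k * W k := by noncomm_ring
        rw [h, hWS (k+1), hWS k, ← smul_sub]
        congr 1
        abel
      rw [hfact, rm_norm_smul, abs_of_nonneg (by norm_num : (0:ℝ) ≤ (2⁻¹:ℝ))]
      have h1 : ‖W (k+1) * (W (k+1) - W k) + (W (k+1) - W k) * W k‖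
          ≤ w (k+1) * (w (k+1) - w k) + (w (k+1) - w k) * w k := by
        refine (norm_add_le _ _).trans ?_
        have h2 := hWnorm (k+1)
        have h3 := hWnorm k
        have h4 := hwnn k
        have h5 := hwnn (k+1)
        have h6 := hwmono (Nat.le_succ k)
        have e1 : ‖W (k+1) * (W (k+1) - W k)‖ ≤ w (k+1) * (w (k+1) - w k) := by
          refine (norm_mul_le _ _).trans ?_
          nlinarith [norm_nonneg (W (k+1) - W k)]
        have e2 : ‖(W (k+1) - W k) * W k‖ ≤ (w (k+1) - w k) * w k := by
          refine (norm_mul_le _ _).trans ?_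
          nlinarith [norm_nonneg (W (k+1) - W k)]
        linarith
      have hw2 : w (k+2) - w (k+1)
          = 2⁻¹ * (w (k+1) * (w (k+1) - w k) + (w (k+1) - w k) * w k) := by
        rw [hwS (k+1), hwS k]; ring
      rw [hw2]
      linarith
  -- distance estimate for `n ≤ m`
  have hWdist : ∀ n m, n ≤ m → ‖W m - W n‖ ≤ w m - w n := by
    intro n m hnm
    induction m with
    | zero =>
      have : n = 0 := Nat.le_zero.mp hnm
      subst this; simp
    | succ k ih =>
      rcases Nat.lt_or_ge n (k+1) with h | h
      · have hnk : n ≤ k := Nat.lt_succ_iff.mp h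
        calc ‖W (k+1) - W n‖ = ‖(W (k+1) - W k) + (W k - W n)‖ := by abel_nf
          _ ≤ ‖W (k+1) - W k‖ + ‖W k - W n‖ := norm_add_le _ _
          _ ≤ (w (k+1) - w k) + (w k - w n) := add_le_add (hWdiff k) (ih hnk)
          _ = w (k+1) - w n := by ring
      · have : n = k + 1 := le_antisymm hnm h
        subst this; simp
  -- Cauchy sequence
  have hwCauchy : CauchySeq w := by
    have hbdd : BddAbove (Set.range w) := ⟨r', by rintro x ⟨n, rfl⟩; exact hwle n⟩
    exact (tendsto_atTop_ciSup hwmono hbdd).cauchySeq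
  have hWCauchy : CauchySeq W := by
    rw [Metric.cauchySeq_iff] at hwCauchy ⊢
    intro ε hε
    obtain ⟨N, hN⟩ := hwCauchy ε hε
    refine ⟨N, fun a ha b hb => ?_⟩
    rcases le_total b a with h | h
    · calc dist (W a) (W b) = ‖W a - W b‖ := by rw [dist_eq_norm]
        _ ≤ w a - w b := hWdist b a h
        _ ≤ |w a - w b| := le_abs_self _
        _ = dist (w a) (w b) := (Real.dist_eq _ _).symm
        _ < ε := hN a ha b hb
    · calc dist (W a) (W b) = ‖W b - W a‖ := by rw [dist_eq_norm, ← norm_neg]; congr 1; abel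
        _ ≤ w b - w a := hWdist a b h
        _ ≤ |w b - w a| := le_abs_self _
        _ = dist (w b) (w a) := (Real.dist_eq _ _).symm
        _ < ε := hN b hb a ha
  obtain ⟨Wl, hWl⟩ := cauchySeq_tendsto_of_complete hWCauchy
  -- pointwise convergence
  have happly : ∀ x : P, Filter.Tendsto (fun n => W n x) Filter.atTop (nhds (Wl x)) := by
    intro x
    exact ((ContinuousLinearMap.apply ℝ P x).continuous.tendsto Wl).comp hWl
  -- fixed point equation
  have hfixW : Wl = (2⁻¹ : ℝ) • (Y + Wl * Wl) := by
    have h1 : Filter.Tendsto (fun n => W (n+1)) Filter.atTop (nhds Wl) :=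
      hWl.comp (Filter.tendsto_add_atTop_nat 1)
    have h2 : Filter.Tendsto (fun n => (2⁻¹ : ℝ) • (Y + W n * W n)) Filter.atTop
        (nhds ((2⁻¹ : ℝ) • (Y + Wl * Wl))) :=
      ((tendsto_const_nhds.add (hWl.mul hWl)).const_smul _)
    have h3 : (fun n => W (n+1)) = fun n => (2⁻¹ : ℝ) • (Y + W n * W n) :=
      funext fun n => hWS n
    rw [h3] at h1
    exact tendsto_nhds_unique h1 h2
  have hWlsym : RMIsSym Wl := by
    intro x y
    have h1 : Filter.Tendsto (fun n => ⟪W n x, y⟫) Filter.atTop (nhds ⟪Wl x, y⟫) :=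
      (happly x).inner tendsto_const_nhds
    have h2 : Filter.Tendsto (fun n => ⟪x, W n y⟫) Filter.atTop (nhds ⟪x, Wl y⟫) :=
      tendsto_const_nhds.inner (happly y)
    have h3 : (fun n => ⟪W n x, y⟫) = fun n => ⟪x, W n y⟫ := funext fun n => hWsym n x y
    rw [h3] at h1
    exact tendsto_nhds_unique h1 h2
  have hWlnorm : ‖Wl‖ ≤ r' := by
    refine le_of_tendsto hWl.norm (Filter.Eventually.of_forall fun n => ?_)
    exact (hWnorm n).trans (hwle n)
  have hWlcomm : ∀ (Z : P →L[ℝ] P), Z * Y = Y * Z → Z * Wl = Wl * Z := by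
    intro Z hZ
    have h1 : Filter.Tendsto (fun n => Z * W n) Filter.atTop (nhds (Z * Wl)) :=
      tendsto_const_nhds.mul hWl
    have h2 : Filter.Tendsto (fun n => W n * Z) Filter.atTop (nhds (Wl * Z)) :=
      hWl.mul tendsto_const_nhds
    have h3 : (fun n => Z * W n) = fun n => W n * Z := funext fun n => hWcomm Z hZ n
    rw [h3] at h1
    exact tendsto_nhds_unique h1 h2
  refine ⟨1 - Wl, ?_, ?_, ?_, ?_⟩
  · intro x y
    simp only [ContinuousLinearMap.sub_apply, ContinuousLinearMap.one_apply,
      inner_sub_left, inner_sub_right]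
    rw [hWlsym x y]
  · have h2 : (2:ℝ) • Wl = Y + Wl * Wl := by
      nth_rewrite 1 [hfixW]
      rw [smul_smul]; norm_num
    have hWl2 : Wl * Wl = (2:ℝ) • Wl - Y := by rw [h2]; abel
    have hexp : (1 - Wl) * (1 - Wl) = 1 - Wl - Wl + Wl * Wl := by noncomm_ring
    rw [hexp, hWl2, two_smul ℝ Wl]
    abel
  · intro x
    have h1 : ⟪(1 - Wl) x, x⟫ = ‖x‖ ^ 2 - ⟪Wl x, x⟫ := by
      simp only [ContinuousLinearMap.sub_apply, ContinuousLinearMap.one_apply, inner_sub_left]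
      rw [real_inner_self_eq_norm_sq]
    rw [h1]
    have h2 : ⟪Wl x, x⟫ ≤ r' * ‖x‖ ^ 2 := by
      calc ⟪Wl x, x⟫ ≤ ‖Wl x‖ * ‖x‖ := real_inner_le_norm _ _
        _ ≤ (r' * ‖x‖) * ‖x‖ := by
            have := Wl.le_opNorm x
            have h4 : ‖Wl x‖ ≤ r' * ‖x‖ :=
              this.trans (mul_le_mul_of_nonneg_right hWlnorm (norm_nonneg x))
            exact mul_le_mul_of_nonneg_right h4 (norm_nonneg x)
        _ = r' * ‖x‖ ^ 2 := by ring
    have : Real.sqrt (1 - r) = 1 - r' := by simp only [hr']; ring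
    rw [this]
    nlinarith [sq_nonneg (‖x‖)]
  · intro Z hZ
    rw [mul_sub, sub_mul, mul_one, one_mul, hWlcomm Z hZ]

/-- square root of a coercive symmetric operator -/
lemma rm_sqrt (S : P →L[ℝ] P) (hS : RMIsSym S) (γ : ℝ) (hγ : 0 < γ)
    (hform : ∀ x : P, γ * ‖x‖ ^ 2 ≤ ⟪S x, x⟫) :
    ∃ R : P →L[ℝ] P, RMIsSym R ∧ R * R = S ∧
      (∀ x : P, Real.sqrt γ * ‖x‖ ^ 2 ≤ ⟪R x, x⟫) ∧
      (∀ Z : P →L[ℝ] P, Z * S = S * Z → Z * R = R * Z) := by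
  obtain ⟨Γ, hΓ⟩ : ∃ Γ : ℝ, Γ = ‖S‖ + γ := ⟨_, rfl⟩
  have hΓpos : 0 < Γ := by rw [hΓ]; positivity
  have hγΓ : γ ≤ Γ := by have := norm_nonneg S; simp only [hΓ]; linarith
  obtain ⟨Y, hYdef⟩ : ∃ Y : P →L[ℝ] P, Y = 1 - Γ⁻¹ • S := ⟨_, rfl⟩
  have hYsym : RMIsSym Y := by
    intro x y
    simp only [hYdef, ContinuousLinearMap.sub_apply, ContinuousLinearMap.smul_apply,
      ContinuousLinearMap.one_apply, inner_sub_left, inner_sub_right,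
      real_inner_smul_left, real_inner_smul_right]
    rw [hS x y]
  have hYform : ∀ x : P, ⟪Y x, x⟫ = ‖x‖ ^ 2 - Γ⁻¹ * ⟪S x, x⟫ := by
    intro x
    simp only [hYdef, ContinuousLinearMap.sub_apply, ContinuousLinearMap.smul_apply,
      ContinuousLinearMap.one_apply, inner_sub_left, real_inner_smul_left]
    rw [real_inner_self_eq_norm_sq]
  obtain ⟨r, hrdef⟩ : ∃ r : ℝ, r = 1 - γ / Γ := ⟨_, rfl⟩
  have hr0 : 0 ≤ r := by
    have : γ / Γ ≤ 1 := (div_le_one hΓpos).mpr hγΓ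
    simp only [hrdef]; linarith
  have hr1 : r < 1 := by
    have : 0 < γ / Γ := div_pos hγ hΓpos
    simp only [hrdef]; linarith
  have hYabs : ∀ x : P, |⟪Y x, x⟫| ≤ r * ‖x‖ ^ 2 := by
    intro x
    rw [hYform x, abs_le]
    have hxsq : (0:ℝ) ≤ ‖x‖ ^ 2 := sq_nonneg _
    have hSx_up : ⟪S x, x⟫ ≤ ‖S‖ * ‖x‖ ^ 2 := by
      calc ⟪S x, x⟫ ≤ ‖S x‖ * ‖x‖ := real_inner_le_norm _ _
        _ ≤ (‖S‖ * ‖x‖) * ‖x‖ :=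
            mul_le_mul_of_nonneg_right (S.le_opNorm x) (norm_nonneg x)
        _ = ‖S‖ * ‖x‖ ^ 2 := by ring
    have hSx_lo : γ * ‖x‖ ^ 2 ≤ ⟪S x, x⟫ := hform x
    have hΓinv : 0 < Γ⁻¹ := inv_pos.mpr hΓpos
    have hup : Γ⁻¹ * ⟪S x, x⟫ ≤ ‖x‖ ^ 2 := by
      have h5 : Γ⁻¹ * ‖S‖ ≤ 1 := by
        have hSleΓ : ‖S‖ ≤ Γ := by rw [hΓ]; linarith
        calc Γ⁻¹ * ‖S‖ ≤ Γ⁻¹ * Γ := mul_le_mul_of_nonneg_left hSleΓ hΓinv.le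
          _ = 1 := inv_mul_cancel₀ hΓpos.ne'
      calc Γ⁻¹ * ⟪S x, x⟫ ≤ Γ⁻¹ * (‖S‖ * ‖x‖ ^ 2) :=
            mul_le_mul_of_nonneg_left hSx_up hΓinv.le
        _ = (Γ⁻¹ * ‖S‖) * ‖x‖ ^ 2 := by ring
        _ ≤ 1 * ‖x‖ ^ 2 := mul_le_mul_of_nonneg_right h5 hxsq
        _ = ‖x‖ ^ 2 := one_mul _
    have hlo : (γ / Γ) * ‖x‖ ^ 2 ≤ Γ⁻¹ * ⟪S x, x⟫ := by
      have h3 : Γ⁻¹ * (γ * ‖x‖ ^ 2) = (γ / Γ) * ‖x‖ ^ 2 := by field_simp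
      rw [← h3]
      exact mul_le_mul_of_nonneg_left hSx_lo hΓinv.le
    have hrx : r * ‖x‖ ^ 2 = ‖x‖ ^ 2 - (γ / Γ) * ‖x‖ ^ 2 := by rw [hrdef]; ring
    constructor
    · have : 0 ≤ r * ‖x‖ ^ 2 := mul_nonneg hr0 hxsq
      linarith
    · linarith
  have hYnorm : ‖Y‖ ≤ r := rm_norm_le_of_form Y hYsym r hr0 hYabs
  obtain ⟨X, hXsym, hXsq, hXform, hXcomm⟩ := rm_sqrt_one_sub Y hYsym r hr0 hr1 hYnorm
  have h1r : (1:ℝ) - r = γ / Γ := by simp only [hrdef]; ring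
  refine ⟨Real.sqrt Γ • X, ?_, ?_, ?_, ?_⟩
  · intro x y
    simp only [ContinuousLinearMap.smul_apply, real_inner_smul_left, real_inner_smul_right]
    rw [hXsym x y]
  · have h1Y : (1 : P →L[ℝ] P) - Y = Γ⁻¹ • S := by rw [hYdef]; abel
    rw [smul_mul_smul_comm, hXsq, h1Y, smul_smul, Real.mul_self_sqrt hΓpos.le,
      mul_inv_cancel₀ hΓpos.ne', one_smul]
  · intro x
    have h1 := hXform x
    have h2 : ⟪(Real.sqrt Γ • X) x, x⟫ = Real.sqrt Γ * ⟪X x, x⟫ := by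
      simp only [ContinuousLinearMap.smul_apply, real_inner_smul_left]
    rw [h2]
    have h3 : Real.sqrt Γ * (Real.sqrt (1 - r) * ‖x‖ ^ 2) ≤ Real.sqrt Γ * ⟪X x, x⟫ :=
      mul_le_mul_of_nonneg_left h1 (Real.sqrt_nonneg Γ)
    have h4 : Real.sqrt Γ * Real.sqrt (1 - r) = Real.sqrt γ := by
      rw [← Real.sqrt_mul hΓpos.le, h1r]
      congr 1
      field_simp
    calc Real.sqrt γ * ‖x‖ ^ 2 = Real.sqrt Γ * Real.sqrt (1 - r) * ‖x‖ ^ 2 := by rw [h4]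
      _ = Real.sqrt Γ * (Real.sqrt (1 - r) * ‖x‖ ^ 2) := by ring
      _ ≤ Real.sqrt Γ * ⟪X x, x⟫ := h3
  · intro Z hZ
    have hZY : Z * Y = Y * Z := by
      simp only [hYdef, mul_sub, sub_mul, mul_one, one_mul, mul_smul_comm, smul_mul_assoc, hZ]
    rw [mul_smul_comm, smul_mul_assoc, hXcomm Z hZY]

/-- a symmetric operator commuting with a coercive symmetric operator, whose product
with it is positive, is itself positive -/
lemma rm_pos_of_mul_pos (D S : P →L[ℝ] P) (hD : RMIsSym D) (hS : RMIsSym S)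
    (γ : ℝ) (hγ : 0 < γ) (hform : ∀ x : P, γ * ‖x‖ ^ 2 ≤ ⟪S x, x⟫)
    (hcomm : D * S = S * D) (hDS : ∀ x : P, 0 ≤ ⟪(D * S) x, x⟫) :
    ∀ x : P, 0 ≤ ⟪D x, x⟫ := by
  obtain ⟨R, hRsym, hRsq, hRform, hRcomm⟩ := rm_sqrt S hS γ hγ hform
  have hsγ : 0 < Real.sqrt γ := Real.sqrt_pos.mpr hγ
  have hDR : D * R = R * D := hRcomm D hcomm
  -- on the range of R the claim holds
  have key : ∀ y : P, 0 ≤ ⟪D (R y), R y⟫ := by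
    intro y
    have h1 : ⟪D (R y), R y⟫ = ⟪R (D (R y)), y⟫ := by rw [hRsym]
    have h2 : R (D (R y)) = (R * D * R) y := rfl
    have h3 : R * D * R = D * S := by
      rw [← hDR, mul_assoc, hRsq]
    rw [h1, h2, h3]
    exact hDS y
  -- range of R is dense
  have hdense : Dense (Set.range (R : P → P)) := by
    have horth : (LinearMap.range (R : P →ₗ[ℝ] P))ᗮ = ⊥ := by
      rw [Submodule.eq_bot_iff]
      intro y hy
      rw [Submodule.mem_orthogonal] at hy
      have h1 : ⟪R y, y⟫ = 0 := hy (R y) (LinearMap.mem_range.mpr ⟨y, rfl⟩)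
      have h2 := hRform y
      have h3 : ‖y‖ ^ 2 ≤ 0 := by nlinarith
      have h3' := sq_nonneg ‖y‖
      have h4 : ‖y‖ ^ 2 = 0 := le_antisymm h3 h3'
      simpa using pow_eq_zero_iff (n := 2) (by norm_num) |>.mp h4
    have hclos : (LinearMap.range (R : P →ₗ[ℝ] P)).topologicalClosure = ⊤ := by
      rw [← Submodule.orthogonal_orthogonal_eq_closure, horth,
        Submodule.bot_orthogonal_eq_top]
    have hd : Dense ((LinearMap.range (R : P →ₗ[ℝ] P) : Submodule ℝ P) : Set P) := by
      rw [← Submodule.dense_iff_topologicalClosure_eq_top] at hclos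
      exact hclos
    have hset : ((LinearMap.range (R : P →ₗ[ℝ] P) : Submodule ℝ P) : Set P)
        = Set.range (R : P → P) := by
      ext z
      simp [LinearMap.mem_range]
    rwa [hset] at hd
  -- conclude by continuity
  intro x
  have hclosed : IsClosed {z : P | 0 ≤ ⟪D z, z⟫} := by
    have hcont : Continuous fun z : P => ⟪D z, z⟫ :=
      (D.continuous.inner continuous_id)
    exact isClosed_le continuous_const hcont
  have hsub : Set.range R ⊆ {z : P | 0 ≤ ⟪D z, z⟫} := by
    rintro _ ⟨y, rfl⟩; exact key y
  have := hdense.closure_eq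
  have h5 : closure (Set.range R) ⊆ {z : P | 0 ≤ ⟪D z, z⟫} := closure_minimal hsub hclosed
  rw [this] at h5
  exact h5 (Set.mem_univ x)

/-- comparison of forms of commuting symmetric operators from comparison of squares -/
lemma rm_form_le (G R : P →L[ℝ] P) (hG : RMIsSym G) (hR : RMIsSym R)
    (hcomm : G * R = R * G) (γ : ℝ) (hγ : 0 < γ)
    (hsum : ∀ x : P, γ * ‖x‖ ^ 2 ≤ ⟪(G + R) x, x⟫)
    (hsq : ∀ x : P, 0 ≤ ⟪(G * G - R * R) x, x⟫) :
    ∀ x : P, ⟪R x, x⟫ ≤ ⟪G x, x⟫ := by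
  have hDsym : RMIsSym (G - R) := by
    intro x y
    simp only [ContinuousLinearMap.sub_apply, inner_sub_left, inner_sub_right, hG x y, hR x y]
  have hSsym : RMIsSym (G + R) := by
    intro x y
    simp only [ContinuousLinearMap.add_apply, inner_add_left, inner_add_right, hG x y, hR x y]
  have e1 : (G - R) * (G + R) = G * G - R * R + (G * R - R * G) := by noncomm_ring
  have e2 : (G + R) * (G - R) = G * G - R * R - (G * R - R * G) := by noncomm_ring
  rw [hcomm, sub_self, add_zero] at e1
  rw [hcomm, sub_self, sub_zero] at e2
  have hDScomm : (G - R) * (G + R) = (G + R) * (G - R) := by rw [e1, e2]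
  have hDSpos : ∀ x : P, 0 ≤ ⟪((G - R) * (G + R)) x, x⟫ := by
    intro x; rw [e1]; exact hsq x
  have hpos := rm_pos_of_mul_pos (G - R) (G + R) hDsym hSsym γ hγ hsum hDScomm hDSpos
  intro x
  have := hpos x
  simp only [ContinuousLinearMap.sub_apply, inner_sub_left] at this
  linarith

end RMAux

/-- Convergence of the Ramshaw–Mesina iteration for the abstract saddle point problem:
with Schur complement `𝒜 = B A⁻¹ B*` self-adjoint and spectrally bounded,
`α ≠ 0`, `β ≥ 0`, `β + α² < 1/M`, the iterates of
Step 1: `A u_{n+1} + B* pₙ = f`, Step 2: `p_{n+1} − pₙ − β B(u_{n+1} − uₙ) − α² B u_{n+1} = 0`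
converge to the exact solution `(u, p)` of `A u + B* p = f`, `B u = 0`. -/
theorem ramshaw_mesina_saddle_point_convergence
    {V P : Type*} [NormedAddCommGroup V] [InnerProductSpace ℝ V] [CompleteSpace V]
    [NormedAddCommGroup P] [InnerProductSpace ℝ P] [CompleteSpace P]
    (A : V ≃L[ℝ] V) (hAsa : ∀ x y : V, ⟪A x, y⟫ = ⟪x, A y⟫)
    (B : V →L[ℝ] P) (f : V)
    (𝒜 : P → P)
    (h𝒜 : ∀ q : P, 𝒜 q = B (A.symm (ContinuousLinearMap.adjoint B q)))
    (h𝒜sa : ∀ q r : P, ⟪𝒜 q, r⟫ = ⟪q, 𝒜 r⟫)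
    (m M : ℝ) (hm : 0 < m) (hmM : m ≤ M)
    (hlow : ∀ q : P, m * ‖q‖ ^ 2 ≤ ⟪𝒜 q, q⟫)
    (hhigh : ∀ q : P, ⟪𝒜 q, q⟫ ≤ M * ‖q‖ ^ 2)
    (α β : ℝ) (hα : α ≠ 0) (hβ : 0 ≤ β) (hcond : β + α ^ 2 < 1 / M)
    (u : V) (p : P)
    (hu : A u + ContinuousLinearMap.adjoint B p = f) (hdiv : B u = 0)
    (uSeq : ℕ → V) (pSeq : ℕ → P)
    (hstep1 : ∀ n : ℕ,
      A (uSeq (n + 1)) + ContinuousLinearMap.adjoint B (pSeq n) = f)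
    (hstep2 : ∀ n : ℕ, 1 ≤ n →
      pSeq (n + 1) - pSeq n - β • B (uSeq (n + 1) - uSeq n)
        - α ^ 2 • B (uSeq (n + 1)) = 0) :
    Filter.Tendsto pSeq Filter.atTop (nhds p) ∧
    Filter.Tendsto uSeq Filter.atTop (nhds u) := by
  classical
  -- scalar constants
  have hMpos : 0 < M := lt_of_lt_of_le hm hmM
  have hα2 : 0 < α ^ 2 := by positivity
  obtain ⟨c, hc_def⟩ : ∃ c : ℝ, c = β + α ^ 2 := ⟨_, rfl⟩
  have hc_pos : 0 < c := by rw [hc_def]; positivity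
  have hcM : c * M < 1 := by
    rw [hc_def]
    calc (β + α ^ 2) * M < (1 / M) * M := by
          exact mul_lt_mul_of_pos_right hcond hMpos
      _ = 1 := by field_simp
  obtain ⟨δ, hδ_def⟩ : ∃ δ : ℝ, δ = 1 - c * M := ⟨_, rfl⟩
  have hδpos : 0 < δ := by rw [hδ_def]; linarith
  have hδ1 : δ ≤ 1 := by
    rw [hδ_def]; nlinarith
  obtain ⟨η, hη_def⟩ : ∃ η : ℝ, η = α ^ 2 * m / 4 := ⟨_, rfl⟩
  have hηpos : 0 < η := by rw [hη_def]; positivity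
  have hα2m : α ^ 2 * m < 1 := by
    have h1 : α ^ 2 ≤ c := by rw [hc_def]; linarith
    nlinarith
  have hη4 : η < 1 / 4 := by rw [hη_def]; linarith
  obtain ⟨ρ, hρ_def⟩ : ∃ ρ : ℝ, ρ = max (1 - δ / 2) (1 - η) := ⟨_, rfl⟩
  have hρlt1 : ρ < 1 := by rw [hρ_def]; exact max_lt (by linarith) (by linarith)
  have hρhalf : 1 / 2 ≤ ρ := by
    rw [hρ_def]
    exact le_trans (by linarith) (le_max_left _ _)
  have hρpos : 0 < ρ := by linarith
  -- the Schur complement as a continuous linear map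
  obtain ⟨T, hT_def⟩ : ∃ T : P →L[ℝ] P,
      T = B.comp ((A.symm : V →L[ℝ] V).comp (ContinuousLinearMap.adjoint B)) := ⟨_, rfl⟩
  have hTapp : ∀ q : P, T q = 𝒜 q := by
    intro q
    rw [hT_def, h𝒜 q]
    rfl
  have hTsym : RMIsSym T := by
    intro x y; rw [hTapp, hTapp, h𝒜sa]
  have hTlow : ∀ q : P, m * ‖q‖ ^ 2 ≤ ⟪T q, q⟫ := fun q => by rw [hTapp]; exact hlow q
  have hThigh : ∀ q : P, ⟪T q, q⟫ ≤ M * ‖q‖ ^ 2 := fun q => by rw [hTapp]; exact hhigh q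
  -- the operator a = 1 - c T
  obtain ⟨a, ha_def⟩ : ∃ a : P →L[ℝ] P, a = 1 - c • T := ⟨_, rfl⟩
  have ha_app : ∀ q : P, a q = q - c • T q := by
    intro q
    rw [ha_def]
    simp [ContinuousLinearMap.sub_apply, ContinuousLinearMap.smul_apply]
  have ha_sym : RMIsSym a := by
    intro x y
    rw [ha_app, ha_app]
    simp only [inner_sub_left, inner_sub_right, real_inner_smul_left, real_inner_smul_right]
    rw [hTsym x y]
  have ha_form : ∀ q : P, ⟪a q, q⟫ = ‖q‖ ^ 2 - c * ⟪T q, q⟫ := by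
    intro q
    rw [ha_app]
    simp only [inner_sub_left, real_inner_smul_left]
    rw [real_inner_self_eq_norm_sq]
  have ha_low : ∀ q : P, δ * ‖q‖ ^ 2 ≤ ⟪a q, q⟫ := by
    intro q
    rw [ha_form, hδ_def]
    have h1 : c * ⟪T q, q⟫ ≤ c * (M * ‖q‖ ^ 2) :=
      mul_le_mul_of_nonneg_left (hThigh q) hc_pos.le
    nlinarith [sq_nonneg ‖q‖]
  have ha_high : ∀ q : P, ⟪a q, q⟫ ≤ (1 - c * m) * ‖q‖ ^ 2 := by
    intro q
    rw [ha_form]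
    have h1 : c * (m * ‖q‖ ^ 2) ≤ c * ⟪T q, q⟫ :=
      mul_le_mul_of_nonneg_left (hTlow q) hc_pos.le
    nlinarith [sq_nonneg ‖q‖]
  have hcm_nonneg : 0 ≤ c * m := by positivity
  -- S = a² + 4β T  and its square root R
  obtain ⟨S, hS_def⟩ : ∃ S : P →L[ℝ] P, S = a * a + (4 * β) • T := ⟨_, rfl⟩
  have hS_sym : RMIsSym S := by
    intro x y
    rw [hS_def]
    simp only [ContinuousLinearMap.add_apply, ContinuousLinearMap.mul_apply,
      ContinuousLinearMap.smul_apply, inner_add_left, inner_add_right,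
      real_inner_smul_left, real_inner_smul_right]
    rw [ha_sym (a x) y, ha_sym x (a y), hTsym x y]
  have hS_form : ∀ q : P, δ ^ 2 * ‖q‖ ^ 2 ≤ ⟪S q, q⟫ := by
    intro q
    rw [hS_def]
    simp only [ContinuousLinearMap.add_apply, ContinuousLinearMap.mul_apply,
      ContinuousLinearMap.smul_apply, inner_add_left, real_inner_smul_left]
    have h1 : ⟪a (a q), q⟫ = ‖a q‖ ^ 2 := by
      rw [ha_sym (a q) q]
      rw [real_inner_comm, real_inner_self_eq_norm_sq]
    rw [h1]
    have h2 : δ * ‖q‖ ^ 2 ≤ ‖a q‖ * ‖q‖ := by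
      calc δ * ‖q‖ ^ 2 ≤ ⟪a q, q⟫ := ha_low q
        _ ≤ ‖a q‖ * ‖q‖ := real_inner_le_norm _ _
    have h3 : δ ^ 2 * ‖q‖ ^ 2 ≤ ‖a q‖ ^ 2 := by
      rcases eq_or_ne q 0 with rfl | hq
      · simp
      · have hqpos : 0 < ‖q‖ := norm_pos_iff.mpr hq
        have h4 : δ * ‖q‖ ≤ ‖a q‖ := by
          have h2' : δ * ‖q‖ * ‖q‖ ≤ ‖a q‖ * ‖q‖ := by nlinarith
          exact le_of_mul_le_mul_right h2' hqpos
        nlinarith [norm_nonneg (a q), norm_nonneg q, mul_nonneg hδpos.le (norm_nonneg q)]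
    have h5 : 0 ≤ 4 * β * ⟪T q, q⟫ := by
      have := hTlow q
      have h6 : (0:ℝ) ≤ m * ‖q‖ ^ 2 := by positivity
      nlinarith
    linarith
  -- commutation relations
  have hTa : T * a = a * T := by
    rw [ha_def, mul_sub, sub_mul, mul_one, one_mul, mul_smul_comm, smul_mul_assoc]
  have hTS : T * S = S * T := by
    rw [hS_def, mul_add, add_mul, mul_smul_comm, smul_mul_assoc]
    congr 1
    rw [← mul_assoc, hTa, mul_assoc, hTa, mul_assoc]
  have haS : a * S = S * a := by
    rw [hS_def, mul_add, add_mul, mul_smul_comm, smul_mul_assoc, ← hTa, mul_assoc]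
  obtain ⟨R, hR_sym, hR_sq, hR_form0, hR_comm⟩ :=
    rm_sqrt S hS_sym (δ ^ 2) (by positivity) hS_form
  have hR_form : ∀ q : P, 0 ≤ ⟪R q, q⟫ := by
    intro q
    refine le_trans ?_ (hR_form0 q)
    positivity
  have hTR : T * R = R * T := hR_comm T hTS
  have haR : a * R = R * a := hR_comm a haS
  -- K and L
  obtain ⟨K, hK_def⟩ : ∃ K : P →L[ℝ] P, K = (2⁻¹ : ℝ) • (a + R) := ⟨_, rfl⟩
  obtain ⟨L, hL_def⟩ : ∃ L : P →L[ℝ] P, L = (2⁻¹ : ℝ) • (a - R) := ⟨_, rfl⟩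
  have hKL_sum : K + L = a := by
    rw [hK_def, hL_def, ← smul_add]
    have h1 : (a + R) + (a - R) = (2:ℝ) • a := by rw [two_smul]; abel
    rw [h1, smul_smul]
    norm_num
  have haR_sub : (a + R) * (a - R) = a * a - R * R := by
    have e1 : (a + R) * (a - R) = a * a - R * R - (a * R - R * a) := by noncomm_ring
    rw [haR, sub_self, sub_zero] at e1
    exact e1
  have haR_sub' : (a - R) * (a + R) = a * a - R * R := by
    have e1 : (a - R) * (a + R) = a * a - R * R + (a * R - R * a) := by noncomm_ring
    rw [haR, sub_self, add_zero] at e1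
    exact e1
  have haa_S : a * a - S = -((4 * β) • T) := by rw [hS_def]; abel
  have hKL : K * L = (-β) • T := by
    rw [hK_def, hL_def, smul_mul_smul_comm, haR_sub, hR_sq, haa_S, smul_neg, smul_smul]
    rw [show (2⁻¹ : ℝ) * 2⁻¹ * (4 * β) = β by ring]
    exact (neg_smul β T).symm
  have hLK : L * K = K * L := by
    rw [hK_def, hL_def, smul_mul_smul_comm, smul_mul_smul_comm, haR_sub, haR_sub']
  -- form bounds for K and L
  have hK_form : ∀ q : P, ⟪K q, q⟫ = 2⁻¹ * (⟪a q, q⟫ + ⟪R q, q⟫) := by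
    intro q
    rw [hK_def]
    simp only [ContinuousLinearMap.smul_apply, ContinuousLinearMap.add_apply,
      real_inner_smul_left, inner_add_left]
  have hL_form : ∀ q : P, ⟪L q, q⟫ = 2⁻¹ * (⟪a q, q⟫ - ⟪R q, q⟫) := by
    intro q
    rw [hL_def]
    simp only [ContinuousLinearMap.smul_apply, ContinuousLinearMap.sub_apply,
      real_inner_smul_left, inner_sub_left]
  -- bound for L
  have hG_cmp : ∀ q : P, ⟪R q, q⟫ ≤ (2 - δ) * ‖q‖ ^ 2 + ⟪a q, q⟫ := by
    obtain ⟨G, hG_def⟩ : ∃ G : P →L[ℝ] P, G = (2 - δ) • (1 : P →L[ℝ] P) + a := ⟨_, rfl⟩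
    have hG_app : ∀ q : P, G q = (2 - δ) • q + a q := by
      intro q
      rw [hG_def]
      simp [ContinuousLinearMap.add_apply, ContinuousLinearMap.smul_apply]
    have hG_form : ∀ q : P, ⟪G q, q⟫ = (2 - δ) * ‖q‖ ^ 2 + ⟪a q, q⟫ := by
      intro q
      rw [hG_app]
      simp only [inner_add_left, real_inner_smul_left]
      rw [real_inner_self_eq_norm_sq]
    have hG_sym : RMIsSym G := by
      intro x y
      rw [hG_app, hG_app]
      simp only [inner_add_left, inner_add_right, real_inner_smul_left, real_inner_smul_right]
      rw [ha_sym x y]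
    have hG_commR : G * R = R * G := by
      rw [hG_def, add_mul, mul_add, smul_mul_assoc, mul_smul_comm, one_mul, mul_one, haR]
    have hsum : ∀ q : P, 2 * ‖q‖ ^ 2 ≤ ⟪(G + R) q, q⟫ := by
      intro q
      simp only [ContinuousLinearMap.add_apply, inner_add_left]
      rw [hG_form]
      have h1 := ha_low q
      have h2 := hR_form q
      nlinarith [sq_nonneg ‖q‖]
    have hGG : G * G - R * R
        = ((2 - δ) * (2 - δ)) • (1 : P →L[ℝ] P) + (2 - δ) • a + (2 - δ) • a
          - (4 * β) • T := by
      simp only [hG_def, hR_sq, hS_def, add_mul, mul_add, smul_mul_assoc, mul_smul_comm,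
        one_mul, mul_one, smul_add, smul_smul]
      abel
    have hsq : ∀ q : P, 0 ≤ ⟪(G * G - R * R) q, q⟫ := by
      intro q
      rw [hGG]
      simp only [ContinuousLinearMap.sub_apply, ContinuousLinearMap.add_apply,
        ContinuousLinearMap.smul_apply, ContinuousLinearMap.one_apply,
        inner_sub_left, inner_add_left, real_inner_smul_left]
      rw [real_inner_self_eq_norm_sq]
      have h1 : (2 - δ) * (δ * ‖q‖ ^ 2) ≤ (2 - δ) * ⟪a q, q⟫ :=
        mul_le_mul_of_nonneg_left (ha_low q) (by linarith)
      have h2 : 4 * β * ⟪T q, q⟫ ≤ 4 * β * (M * ‖q‖ ^ 2) := by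
        have := mul_le_mul_of_nonneg_left (hThigh q) hβ
        nlinarith
      have hβM : β * M ≤ c * M := by
        have : β ≤ c := by rw [hc_def]; linarith
        exact mul_le_mul_of_nonneg_right this hMpos.le
      have hδM : c * M = 1 - δ := by rw [hδ_def]; ring
      have h3 : β * M * ‖q‖ ^ 2 ≤ (1 - δ) * ‖q‖ ^ 2 := by
        rw [← hδM]
        exact mul_le_mul_of_nonneg_right hβM (sq_nonneg _)
      nlinarith [sq_nonneg ‖q‖, mul_nonneg (mul_nonneg hδpos.le
        (by linarith : (0:ℝ) ≤ 4 - δ)) (sq_nonneg ‖q‖)]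
    have := rm_form_le G R hG_sym hR_sym hG_commR 2 (by norm_num) hsum hsq
    intro q
    rw [← hG_form]
    exact this q
  
  -- operator norm of L
  have hLsym : RMIsSym L := by
    intro x y
    rw [hL_def]
    simp only [ContinuousLinearMap.smul_apply, ContinuousLinearMap.sub_apply,
      real_inner_smul_left, real_inner_smul_right, inner_sub_left, inner_sub_right]
    rw [ha_sym x y, hR_sym x y]
  have hKsym : RMIsSym K := by
    intro x y
    rw [hK_def]
    simp only [ContinuousLinearMap.smul_apply, ContinuousLinearMap.add_apply,
      real_inner_smul_left, real_inner_smul_right, inner_add_left, inner_add_right]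
    rw [ha_sym x y, hR_sym x y]
  have hLnorm : ‖L‖ ≤ ρ := by
    apply rm_norm_le_of_form L hLsym ρ hρpos.le
    intro q
    rw [hL_form, abs_le]
    have h1 := ha_low q
    have h2 := ha_high q
    have h3 := hR_form q
    have h4 := hG_cmp q
    have hq2 := sq_nonneg ‖q‖
    constructor
    · -- lower bound : ⟪Lq,q⟫ ≥ -(1 - δ/2)‖q‖² ≥ -ρ‖q‖²
      have h5 : 2⁻¹ * (⟪a q, q⟫ - ⟪R q, q⟫) ≥ -((1 - δ / 2) * ‖q‖ ^ 2) := by nlinarith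
      have h6 : (1 - δ / 2) ≤ ρ := by rw [hρ_def]; exact le_max_left _ _
      nlinarith
    · -- upper bound : ⟪Lq,q⟫ ≤ 2⁻¹(1 - cm)‖q‖² ≤ ρ‖q‖²
      have h5 : 2⁻¹ * (⟪a q, q⟫ - ⟪R q, q⟫) ≤ 2⁻¹ * ((1 - c * m) * ‖q‖ ^ 2) := by nlinarith
      have h6 : 2⁻¹ * (1 - c * m) ≤ ρ := by nlinarith
      nlinarith
  -- comparison for K : R ≤ 2(1-η)·1 - a
  have hmc : m * c ≤ 1 := by nlinarith
  have hG'_cmp : ∀ q : P, ⟪R q, q⟫ ≤ 2 * (1 - η) * ‖q‖ ^ 2 - ⟪a q, q⟫ := by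
    obtain ⟨G', hG'_def⟩ : ∃ G' : P →L[ℝ] P,
      G' = (2 * (1 - η)) • (1 : P →L[ℝ] P) - a := ⟨_, rfl⟩
    have hG'_app : ∀ q : P, G' q = (2 * (1 - η)) • q - a q := by
      intro q
      rw [hG'_def]
      simp [ContinuousLinearMap.sub_apply, ContinuousLinearMap.smul_apply]
    have hG'_form : ∀ q : P, ⟪G' q, q⟫ = 2 * (1 - η) * ‖q‖ ^ 2 - ⟪a q, q⟫ := by
      intro q
      rw [hG'_app]
      simp only [inner_sub_left, real_inner_smul_left]
      rw [real_inner_self_eq_norm_sq]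
    have hG'_sym : RMIsSym G' := by
      intro x y
      rw [hG'_app, hG'_app]
      simp only [inner_sub_left, inner_sub_right, real_inner_smul_left, real_inner_smul_right]
      rw [ha_sym x y]
    have hG'_commR : G' * R = R * G' := by
      simp only [hG'_def, sub_mul, mul_sub, smul_mul_assoc, mul_smul_comm, one_mul,
        mul_one, haR]
    have hsum : ∀ q : P, (1 - 2 * η) * ‖q‖ ^ 2 ≤ ⟪(G' + R) q, q⟫ := by
      intro q
      simp only [ContinuousLinearMap.add_apply, inner_add_left]
      rw [hG'_form]
      have h1 := ha_high q
      have h2 := hR_form q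
      nlinarith [sq_nonneg ‖q‖]
    have hGG' : G' * G' - R * R
        = ((2 * (1 - η)) * (2 * (1 - η))) • (1 : P →L[ℝ] P)
          - (2 * (1 - η)) • a - (2 * (1 - η)) • a - (4 * β) • T := by
      simp only [hG'_def, hR_sq, hS_def, sub_mul, mul_sub, smul_mul_assoc, mul_smul_comm,
        one_mul, mul_one, smul_sub, smul_smul]
      abel
    have hcoef : 0 ≤ 2 * (2 * (1 - η)) * c - 4 * β := by
      have hid2 : 2 * (2 * (1 - η)) * c - 4 * β = α ^ 2 * (4 - m * c) := by
        rw [hη_def, hc_def]; ring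
      rw [hid2]
      nlinarith
    have hS2 : 0 ≤ (2 * (1 - η)) * (2 * (1 - η)) - 2 * (2 * (1 - η))
        + (2 * (2 * (1 - η)) * c - 4 * β) * m := by
      have hid : (2 * (1 - η)) * (2 * (1 - η)) - 2 * (2 * (1 - η))
          + (2 * (2 * (1 - η)) * c - 4 * β) * m = 4 * η * (3 + η - m * c) := by
        rw [hη_def, hc_def]; ring
      rw [hid]
      nlinarith
    have hsq : ∀ q : P, 0 ≤ ⟪(G' * G' - R * R) q, q⟫ := by
      intro q
      rw [hGG']
      simp only [ContinuousLinearMap.sub_apply, ContinuousLinearMap.smul_apply,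
        ContinuousLinearMap.one_apply, inner_sub_left, real_inner_smul_left]
      rw [real_inner_self_eq_norm_sq]
      have haf := ha_form q
      have hts := hTlow q
      have hs := sq_nonneg ‖q‖
      nlinarith [mul_nonneg hcoef (by linarith : (0:ℝ) ≤ ⟪T q, q⟫ - m * ‖q‖ ^ 2),
        mul_nonneg hS2 hs]
    have hcmp := rm_form_le G' R hG'_sym hR_sym hG'_commR (1 - 2 * η)
      (by linarith) hsum hsq
    intro q
    rw [← hG'_form]
    exact hcmp q
  -- operator norm of K
  have hKnorm : ‖K‖ ≤ ρ := by
    apply rm_norm_le_of_form K hKsym ρ hρpos.le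
    intro q
    rw [hK_form, abs_le]
    have h1 := ha_low q
    have h3 := hR_form q
    have h4 := hG'_cmp q
    have hq2 := sq_nonneg ‖q‖
    constructor
    · have h7 : 0 ≤ ⟪a q, q⟫ := le_trans (mul_nonneg hδpos.le hq2) h1
      have h8 : 0 ≤ ρ * ‖q‖ ^ 2 := mul_nonneg hρpos.le hq2
      linarith
    · have h6 : 1 - η ≤ ρ := by rw [hρ_def]; exact le_max_right _ _
      have h9 : (1 - η) * ‖q‖ ^ 2 ≤ ρ * ‖q‖ ^ 2 := mul_le_mul_of_nonneg_right h6 hq2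
      linarith
  -- pointwise contraction bounds
  have hKpt : ∀ x : P, ‖K x‖ ≤ ρ * ‖x‖ := by
    intro x
    exact (K.le_opNorm x).trans (mul_le_mul_of_nonneg_right hKnorm (norm_nonneg x))
  have hLpt : ∀ x : P, ‖L x‖ ≤ ρ * ‖x‖ := by
    intro x
    exact (L.le_opNorm x).trans (mul_le_mul_of_nonneg_right hLnorm (norm_nonneg x))
  -- error sequence
  obtain ⟨e, he_def⟩ : ∃ e : ℕ → P, e = fun n => pSeq n - p := ⟨_, rfl⟩
  have he_app : ∀ n, e n = pSeq n - p := fun n => by rw [he_def]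
  -- velocity representation
  have hu_rep : ∀ n : ℕ, uSeq (n + 1) = A.symm (A u - ContinuousLinearMap.adjoint B (e n)) := by
    intro n
    have h1 : A (uSeq (n + 1)) + ContinuousLinearMap.adjoint B (pSeq n)
        = A u + ContinuousLinearMap.adjoint B p := by rw [hstep1 n, hu]
    have h2 : A (uSeq (n + 1)) = A u - ContinuousLinearMap.adjoint B (e n) := by
      have h3 := eq_sub_of_add_eq h1
      rw [h3, he_app, map_sub]
      abel
    calc uSeq (n + 1) = A.symm (A (uSeq (n + 1))) := (A.symm_apply_apply _).symm
      _ = A.symm (A u - ContinuousLinearMap.adjoint B (e n)) := by rw [h2]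
  have hBu : ∀ n : ℕ, B (uSeq (n + 1)) = -(T (e n)) := by
    intro n
    calc B (uSeq (n + 1))
        = B (A.symm (A u - ContinuousLinearMap.adjoint B (e n))) := by rw [hu_rep n]
      _ = B (A.symm (A u) - A.symm (ContinuousLinearMap.adjoint B (e n))) := by
          rw [map_sub A.symm]
      _ = B u - B (A.symm (ContinuousLinearMap.adjoint B (e n))) := by
          rw [A.symm_apply_apply, map_sub B]
      _ = -(T (e n)) := by
          rw [hdiv, zero_sub]
          congr 1
          rw [hT_def]
          rfl
  -- error recursion
  have hrec : ∀ k : ℕ, e (k + 2) = a (e (k + 1)) + β • T (e k) := by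
    intro k
    have h := hstep2 (k + 1) (Nat.le_add_left 1 k)
    rw [show k + 1 + 1 = k + 2 from rfl] at h
    rw [map_sub, hBu (k + 1), hBu k] at h
    have hps : pSeq (k + 2) - pSeq (k + 1) = e (k + 2) - e (k + 1) := by
      rw [he_app, he_app]; abel
    rw [hps] at h
    simp only [sub_neg_eq_add, smul_add, smul_sub, smul_neg, neg_neg] at h
    rw [ha_app, hc_def]
    simp only [smul_sub, smul_neg, add_smul]
    linear_combination (norm := abel) h
  -- v sequence
  obtain ⟨v, hv_def⟩ : ∃ v : ℕ → P, v = fun k => e (k + 1) - K (e k) := ⟨_, rfl⟩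
  have hv_app : ∀ k, v k = e (k + 1) - K (e k) := fun k => by rw [hv_def]
  have hv_rec : ∀ k : ℕ, v (k + 1) = L (v k) := by
    intro k
    have h1 : a (e (k + 1)) - K (e (k + 1)) = L (e (k + 1)) := by
      rw [← hKL_sum]
      simp only [ContinuousLinearMap.add_apply]
      abel
    have h2 : L (K (e k)) = -(β • T (e k)) := by
      have h3 := ContinuousLinearMap.ext_iff.mp (hLK.trans hKL) (e k)
      simpa [ContinuousLinearMap.mul_apply, ContinuousLinearMap.smul_apply,
        neg_smul] using h3
    calc v (k + 1) = e (k + 2) - K (e (k + 1)) := hv_app _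
      _ = a (e (k + 1)) + β • T (e k) - K (e (k + 1)) := by rw [hrec k]
      _ = (a (e (k + 1)) - K (e (k + 1))) + β • T (e k) := by abel
      _ = L (e (k + 1)) + β • T (e k) := by rw [h1]
      _ = L (e (k + 1)) - L (K (e k)) := by rw [h2]; abel
      _ = L (e (k + 1) - K (e k)) := (map_sub L _ _).symm
      _ = L (v k) := by rw [hv_app]
  -- geometric decay of v
  have hv_norm : ∀ k : ℕ, ‖v k‖ ≤ ρ ^ k * ‖v 0‖ := by
    intro k
    induction k with
    | zero => simp
    | succ n ih =>
      calc ‖v (n + 1)‖ = ‖L (v n)‖ := by rw [hv_rec n]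
        _ ≤ ρ * ‖v n‖ := hLpt _
        _ ≤ ρ * (ρ ^ n * ‖v 0‖) := mul_le_mul_of_nonneg_left ih hρpos.le
        _ = ρ ^ (n + 1) * ‖v 0‖ := by rw [pow_succ]; ring
  -- growth bound for e
  have he_step : ∀ k : ℕ, e (k + 1) = K (e k) + v k := by
    intro k
    rw [hv_app]
    abel
  have he_bound : ∀ k : ℕ, ‖e k‖ ≤ ρ ^ k * (‖e 0‖ + k * (‖v 0‖ / ρ)) := by
    intro k
    induction k with
    | zero => simp
    | succ n ih =>
      have h1 : ‖e (n + 1)‖ ≤ ρ * ‖e n‖ + ρ ^ n * ‖v 0‖ := by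
        calc ‖e (n + 1)‖ = ‖K (e n) + v n‖ := by rw [he_step n]
          _ ≤ ‖K (e n)‖ + ‖v n‖ := norm_add_le _ _
          _ ≤ ρ * ‖e n‖ + ρ ^ n * ‖v 0‖ := add_le_add (hKpt _) (hv_norm n)
      have h2 : ρ * ‖e n‖ ≤ ρ * (ρ ^ n * (‖e 0‖ + n * (‖v 0‖ / ρ))) :=
        mul_le_mul_of_nonneg_left ih hρpos.le
      have h3 : ρ ^ n * ‖v 0‖ = ρ ^ (n + 1) * (‖v 0‖ / ρ) := by
        field_simp [pow_succ]
        ring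
      have h4 : ρ * (ρ ^ n * (‖e 0‖ + n * (‖v 0‖ / ρ))) + ρ ^ (n + 1) * (‖v 0‖ / ρ)
          = ρ ^ (n + 1) * (‖e 0‖ + (n + 1 : ℕ) * (‖v 0‖ / ρ)) := by
        push_cast
        rw [pow_succ]
        ring
      calc ‖e (n + 1)‖ ≤ ρ * ‖e n‖ + ρ ^ n * ‖v 0‖ := h1
        _ ≤ ρ * (ρ ^ n * (‖e 0‖ + n * (‖v 0‖ / ρ))) + ρ ^ (n + 1) * (‖v 0‖ / ρ) := by
            rw [← h3]; exact add_le_add h2 le_rfl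
        _ = ρ ^ (n + 1) * (‖e 0‖ + (n + 1 : ℕ) * (‖v 0‖ / ρ)) := h4
  -- convergence of the error to zero
  have ht1 : Filter.Tendsto (fun k : ℕ => ρ ^ k) Filter.atTop (nhds 0) :=
    tendsto_pow_atTop_nhds_zero_of_lt_one hρpos.le hρlt1
  have ht2 : Filter.Tendsto (fun k : ℕ => (k : ℝ) * ρ ^ k) Filter.atTop (nhds 0) := by
    have hsum : Summable (fun k : ℕ => (k : ℝ) ^ 1 * ρ ^ k) :=
      summable_pow_mul_geometric_of_norm_lt_one 1
        (by rw [Real.norm_eq_abs, abs_of_nonneg hρpos.le]; exact hρlt1)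
    have := hsum.tendsto_atTop_zero
    simpa using this
  have he_tendsto : Filter.Tendsto e Filter.atTop (nhds 0) := by
    have hgt : Filter.Tendsto
        (fun k : ℕ => ‖e 0‖ * ρ ^ k + (‖v 0‖ / ρ) * ((k : ℝ) * ρ ^ k))
        Filter.atTop (nhds 0) := by
      have := (ht1.const_mul ‖e 0‖).add (ht2.const_mul (‖v 0‖ / ρ))
      simpa using this
    refine squeeze_zero_norm (fun k => ?_) hgt
    exact (he_bound k).trans_eq (by ring)
  constructor
  · have hps : pSeq = fun n => e n + p := funext fun n => by rw [he_app]; abel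
    rw [hps]
    simpa using he_tendsto.add (tendsto_const_nhds (x := p))
  · have h1 : Filter.Tendsto (fun n : ℕ => ContinuousLinearMap.adjoint B (e n))
        Filter.atTop (nhds 0) := by
      have := ((ContinuousLinearMap.adjoint B).continuous.tendsto 0).comp he_tendsto
      simpa [Function.comp_def] using this
    have h2 : Filter.Tendsto (fun n : ℕ => A u - ContinuousLinearMap.adjoint B (e n))
        Filter.atTop (nhds (A u)) := by
      simpa using tendsto_const_nhds.sub h1
    have h3 := (A.symm.continuous.tendsto (A u)).comp h2
    have hux : Filter.Tendsto (fun n : ℕ => uSeq (n + 1)) Filter.atTop (nhds u) := by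
      have h4 : (fun n : ℕ => uSeq (n + 1))
          = fun n : ℕ => A.symm (A u - ContinuousLinearMap.adjoint B (e n)) :=
        funext hu_rep
      rw [h4]
      have h5 : A.symm (A u) = u := A.symm_apply_apply u
      simpa [Function.comp_def, h5] using h3
    exact (Filter.tendsto_add_atTop_iff_nat 1).mp hux
end
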